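/- arXiv:2006.08467 — 2 statements merged into one kernel-verified Lean document; each statement's English description precedes it below -/
import Mathlib

section
/- If Σ is a set of fully-existential rules (every head atom contains at least one existential variable), then for every instance I and every term v in the oblivious chase of (I, Σ), the existential depth of v equals the rank of v. -/
namespace ChasePaper

/-- Rules: atoms are (predicate, list of variables). -/
structure Rule (P V : Type) where
  body : List (P × List V)
  head : List (P × List V)

/-- Terms appearing in the chase: constants, (instance) variables, and fresh
variables `z_{(σ,π)}` named by the rule, the existential variable, and a substitution. -/
inductive GTerm (P C V : Type) where
  | const : C → GTerm P C V
  | var   : V → GTerm P C V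
  | fresh : Rule P V → V → (V → GTerm P C V) → GTerm P C V

abbrev GAtom (P C V : Type) := P × List (GTerm P C V)

variable {P C V : Type}

def bodyVars (σ : Rule P V) : List V := σ.body.flatMap Prod.snd
def headVars (σ : Rule P V) : List V := σ.head.flatMap Prod.snd
def frontier [DecidableEq V] (σ : Rule P V) : List V :=
  (bodyVars σ).filter (· ∈ headVars σ)

/-- A rule is datalog if all head variables occur in the body. -/
def IsDatalog (σ : Rule P V) : Prop := ∀ v ∈ headVars σ, v ∈ bodyVars σ
/-- A rule is fully-existential if every head atom contains an existential variable. -/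
def IsFE (σ : Rule P V) : Prop := ∀ a ∈ σ.head, ∃ v ∈ a.2, v ∉ bodyVars σ

def applyAtom (π : V → GTerm P C V) (a : P × List V) : GAtom P C V :=
  (a.1, a.2.map π)

def restrictBody [DecidableEq V] (σ : Rule P V) (π : V → GTerm P C V) : V → GTerm P C V :=
  fun u => if u ∈ bodyVars σ then π u else GTerm.var u

def restrictFr [DecidableEq V] (σ : Rule P V) (π : V → GTerm P C V) : V → GTerm P C V :=
  fun u => if u ∈ frontier σ then π u else GTerm.var u

/-- Oblivious naming of fresh variables: `z_{(σ,π)}`. -/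
def extendO [DecidableEq V] (σ : Rule P V) (π : V → GTerm P C V) : V → GTerm P C V :=
  fun v => if v ∈ bodyVars σ then π v else GTerm.fresh σ v (restrictBody σ π)

/-- Semi-oblivious naming of fresh variables: `z_{(σ,π|fr(σ))}`. -/
def extendSO [DecidableEq V] (σ : Rule P V) (π : V → GTerm P C V) : V → GTerm P C V :=
  fun v => if v ∈ bodyVars σ then π v else GTerm.fresh σ v (restrictFr σ π)

def isTrigger (σ : Rule P V) (π : V → GTerm P C V) (S : Set (GAtom P C V)) : Prop :=
  ∀ a ∈ σ.body, applyAtom π a ∈ S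

/-- Breadth-first oblivious chase. -/
def ochase [DecidableEq V] (Rs : Set (Rule P V)) (I : Set (GAtom P C V)) : ℕ → Set (GAtom P C V)
  | 0 => I
  | i+1 => ochase Rs I i ∪
      {f | ∃ σ ∈ Rs, ∃ π, isTrigger σ π (ochase Rs I i) ∧ ∃ a ∈ σ.head, f = applyAtom (extendO σ π) a}

/-- Breadth-first semi-oblivious chase. -/
def sochase [DecidableEq V] (Rs : Set (Rule P V)) (I : Set (GAtom P C V)) : ℕ → Set (GAtom P C V)
  | 0 => I
  | i+1 => sochase Rs I i ∪
      {f | ∃ σ ∈ Rs, ∃ π, isTrigger σ π (sochase Rs I i) ∧ ∃ a ∈ σ.head, f = applyAtom (extendSO σ π) a}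

def ochaseFull [DecidableEq V] (Rs : Set (Rule P V)) (I : Set (GAtom P C V)) : Set (GAtom P C V) :=
  ⋃ i, ochase Rs I i
def sochaseFull [DecidableEq V] (Rs : Set (Rule P V)) (I : Set (GAtom P C V)) : Set (GAtom P C V) :=
  ⋃ i, sochase Rs I i

/-- Rank of a fact: the smallest breadth-first round at which it appears. -/
noncomputable def rankO [DecidableEq V] (Rs : Set (Rule P V)) (I : Set (GAtom P C V))
    (f : GAtom P C V) : ℕ := sInf {i | f ∈ ochase Rs I i}
noncomputable def rankSO [DecidableEq V] (Rs : Set (Rule P V)) (I : Set (GAtom P C V))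
    (f : GAtom P C V) : ℕ := sInf {i | f ∈ sochase Rs I i}

/-- Rank of a term: the smallest round at which some fact contains it. -/
noncomputable def trankO [DecidableEq V] (Rs : Set (Rule P V)) (I : Set (GAtom P C V))
    (t : GTerm P C V) : ℕ := sInf {i | ∃ f ∈ ochase Rs I i, t ∈ f.2}
noncomputable def trankSO [DecidableEq V] (Rs : Set (Rule P V)) (I : Set (GAtom P C V))
    (t : GTerm P C V) : ℕ := sInf {i | ∃ f ∈ sochase Rs I i, t ∈ f.2}

/-- Existential depth of a term. -/
def depth : GTerm P C V → ℕ
  | .const _ => 0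
  | .var _ => 0
  | .fresh σ _ π => 1 + List.foldr (fun v m => max (depth (π v)) m) 0 (bodyVars σ)

/-- Frontier existential depth of a term. -/
def frdepth [DecidableEq V] : GTerm P C V → ℕ
  | .const _ => 0
  | .var _ => 0
  | .fresh σ _ π =>
      if frontier σ = ([] : List V) then 1
      else 1 + List.foldr (fun v m => max (frdepth (π v)) m) 0 (frontier σ)

/-- Existential depth of a fact: max depth of its terms. -/
def depthF (f : GAtom P C V) : ℕ := List.foldr (fun t m => max (depth t) m) 0 f.2
def frdepthF [DecidableEq V] (f : GAtom P C V) : ℕ :=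
  List.foldr (fun t m => max (frdepth t) m) 0 f.2

/-- Active domain of a set of atoms. -/
def adom (S : Set (GAtom P C V)) : Set (GTerm P C V) := {t | ∃ f ∈ S, t ∈ f.2}

def mapAtom (h : GTerm P C V → GTerm P C V) (f : GAtom P C V) : GAtom P C V :=
  (f.1, f.2.map h)

/-- An embedding from `S` to `S'`: a substitution mapping every atom of `S` into `S'`. -/
def IsEmbedding (h : GTerm P C V → GTerm P C V) (S S' : Set (GAtom P C V)) : Prop :=
  ∀ f ∈ S, mapAtom h f ∈ S'

/-- `I` is an instance w.r.t. an arity function: finite, arity-correct,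
and using only constants and variables. -/
def IsInstance (ar : P → ℕ) (I : Set (GAtom P C V)) : Prop :=
  I.Finite ∧ ∀ f ∈ I, f.2.length = ar f.1 ∧
    ∀ t ∈ f.2, (∃ c, t = GTerm.const c) ∨ (∃ v, t = GTerm.var v)

def RuleOk (ar : P → ℕ) (σ : Rule P V) : Prop :=
  ∀ a ∈ σ.body ++ σ.head, a.2.length = ar a.1

/-- The critical instance over `ar` with special constant `a`. -/
def critical (ar : P → ℕ) (a : C) : Set (GAtom P C V) :=
  {f | f.2 = List.replicate (ar f.1) (GTerm.const a)}


section Aux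

variable [DecidableEq V]

lemma le_foldr_max {α : Type*} (g : α → ℕ) {L : List α} {u : α} (h : u ∈ L) :
    g u ≤ L.foldr (fun v m => max (g v) m) 0 := by
  induction L with
  | nil => cases h
  | cons x xs ih =>
    rcases List.mem_cons.1 h with h | h
    · subst h; simp
    · exact le_trans (ih h) (le_max_right _ _)

lemma foldr_max_le {α : Type*} (g : α → ℕ) {L : List α} {m : ℕ}
    (h : ∀ u ∈ L, g u ≤ m) : L.foldr (fun v m => max (g v) m) 0 ≤ m := by
  induction L with
  | nil => simp
  | cons x xs ih =>
    simp only [List.foldr_cons, max_le_iff]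
    exact ⟨h x (by simp), ih fun u hu => h u (List.mem_cons_of_mem _ hu)⟩

lemma foldr_max_congr {α : Type*} (g g' : α → ℕ) {L : List α}
    (h : ∀ u ∈ L, g u = g' u) :
    L.foldr (fun v m => max (g v) m) 0 = L.foldr (fun v m => max (g' v) m) 0 := by
  induction L with
  | nil => rfl
  | cons x xs ih =>
    simp only [List.foldr_cons]
    rw [h x (by simp), ih fun u hu => h u (List.mem_cons_of_mem _ hu)]

lemma ochase_mono (Rs : Set (Rule P V)) (I : Set (GAtom P C V)) {i j : ℕ} (h : i ≤ j) :
    ochase Rs I i ⊆ ochase Rs I j := by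
  induction j with
  | zero => simp_all
  | succ j ih =>
    rcases Nat.lt_or_ge i (j+1) with h' | h'
    · exact (ih (Nat.lt_succ_iff.1 h')).trans Set.subset_union_left
    · have : i = j + 1 := le_antisymm h h'
      subst this; rfl

lemma mem_bodyVars {σ : Rule P V} {v : V} (h : v ∈ bodyVars σ) :
    ∃ b ∈ σ.body, v ∈ b.2 := by
  simpa [bodyVars, List.mem_flatMap] using h

/-- fresh-term depth for oblivious extension. -/
lemma depth_fresh (σ : Rule P V) (π : V → GTerm P C V) (v : V) :
    depth (GTerm.fresh σ v (restrictBody σ π)) =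
      1 + List.foldr (fun u m => max (depth (π u)) m) 0 (bodyVars σ) := by
  show 1 + _ = 1 + _
  congr 1
  exact foldr_max_congr _ _ fun u hu => by simp [restrictBody, hu]

/-- L1: depth of any term in round `i` is at most `i`. -/
lemma depth_le_round (Rs : Set (Rule P V)) (I : Set (GAtom P C V)) (ar : P → ℕ)
    (hI : IsInstance ar I) :
    ∀ i, ∀ f ∈ ochase Rs I i, ∀ t ∈ f.2, depth t ≤ i := by
  intro i
  induction i with
  | zero =>
    intro f hf t ht
    rcases (hI.2 f hf).2 t ht with ⟨c, rfl⟩ | ⟨v, rfl⟩ <;> simp [depth]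
  | succ i ih =>
    intro f hf t ht
    rcases hf with hf | ⟨σ, _, π, htrig, a, ha, rfl⟩
    · exact (ih f hf t ht).trans (Nat.le_succ i)
    · simp only [applyAtom, List.mem_map] at ht
      obtain ⟨v, hv, rfl⟩ := ht
      have key : ∀ u ∈ bodyVars σ, depth (π u) ≤ i := by
        intro u hu
        obtain ⟨b, hb, hub⟩ := mem_bodyVars hu
        exact ih _ (htrig b hb) (π u) (List.mem_map_of_mem (f := π) hub)
      by_cases hvb : v ∈ bodyVars σ
      · simp only [extendO, if_pos hvb]
        exact (key v hvb).trans (Nat.le_succ i)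
      · simp only [extendO, if_neg hvb]
        rw [depth_fresh]
        have := foldr_max_le (fun u => depth (π u)) key
        beta_reduce at this
        omega

/-- L2': every fact of round `i` already occurs at round `depthF f`. -/
lemma fact_mem_depthF (Rs : Set (Rule P V)) (I : Set (GAtom P C V))
    (hFE : ∀ σ ∈ Rs, IsFE σ) :
    ∀ i, ∀ f ∈ ochase Rs I i, f ∈ ochase Rs I (depthF f) := by
  intro i
  induction i with
  | zero => intro f hf; exact ochase_mono Rs I (Nat.zero_le _) hf
  | succ i ih =>
    intro f hf
    rcases hf with hf | ⟨σ, hσ, π, htrig, a, ha, rfl⟩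
    · exact ih f hf
    · set M := List.foldr (fun u m => max (depth (π u)) m) 0 (bodyVars σ) with hM
      -- the trigger is already a trigger at round M
      have htrigM : isTrigger σ π (ochase Rs I M) := by
        intro b hb
        have hg := ih _ (htrig b hb)
        refine ochase_mono Rs I ?_ hg
        refine foldr_max_le _ ?_
        intro t ht
        simp only [applyAtom, List.mem_map] at ht
        obtain ⟨u, hu, rfl⟩ := ht
        have : u ∈ bodyVars σ := by
          simp only [bodyVars, List.mem_flatMap]; exact ⟨b, hb, hu⟩
        exact le_foldr_max (fun u => depth (π u)) this
      have hfM : applyAtom (extendO σ π) a ∈ ochase Rs I (M + 1) :=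
        Or.inr ⟨σ, hσ, π, htrigM, a, ha, rfl⟩
      -- compute depthF
      obtain ⟨v, hv, hvb⟩ := hFE σ hσ a ha
      have hdf : depthF (applyAtom (extendO σ π) a) = 1 + M := by
        apply le_antisymm
        · refine foldr_max_le _ ?_
          intro t ht
          simp only [applyAtom, List.mem_map] at ht
          obtain ⟨u, hu, rfl⟩ := ht
          by_cases hub : u ∈ bodyVars σ
          · simp only [extendO, if_pos hub]
            have := le_foldr_max (fun u => depth (π u)) hub
            beta_reduce at this
            omega
          · simp only [extendO, if_neg hub]
            rw [depth_fresh]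
        · have hmem : extendO σ π v ∈ (applyAtom (extendO σ π) a).2 :=
            List.mem_map_of_mem hv
          have := le_foldr_max depth hmem
          simp only [extendO, if_neg hvb, depth_fresh] at this
          exact this
      rw [hdf, Nat.add_comm]
      exact hfM

/-- L2: every term of the chase already occurs at round `depth t`. -/
lemma term_mem_depth (Rs : Set (Rule P V)) (I : Set (GAtom P C V))
    (hFE : ∀ σ ∈ Rs, IsFE σ) :
    ∀ i, ∀ f ∈ ochase Rs I i, ∀ t ∈ f.2,
      ∃ g ∈ ochase Rs I (depth t), t ∈ g.2 := by
  intro i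
  induction i with
  | zero =>
    intro f hf t ht
    exact ⟨f, ochase_mono Rs I (Nat.zero_le _) hf, ht⟩
  | succ i ih =>
    intro f hf t ht
    rcases hf with hf | ⟨σ, hσ, π, htrig, a, ha, rfl⟩
    · exact ih f hf t ht
    · simp only [applyAtom, List.mem_map] at ht
      obtain ⟨v, hv, rfl⟩ := ht
      by_cases hvb : v ∈ bodyVars σ
      · simp only [extendO, if_pos hvb]
        obtain ⟨b, hb, hub⟩ := mem_bodyVars hvb
        exact ih _ (htrig b hb) (π v) (List.mem_map_of_mem (f := π) hub)
      · simp only [extendO, if_neg hvb]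
        set M := List.foldr (fun u m => max (depth (π u)) m) 0 (bodyVars σ) with hM
        have htrigM : isTrigger σ π (ochase Rs I M) := by
          intro b hb
          have hg := fact_mem_depthF Rs I hFE i _ (htrig b hb)
          refine ochase_mono Rs I ?_ hg
          refine foldr_max_le _ ?_
          intro t ht
          simp only [applyAtom, List.mem_map] at ht
          obtain ⟨u, hu, rfl⟩ := ht
          have : u ∈ bodyVars σ := by
            simp only [bodyVars, List.mem_flatMap]; exact ⟨b, hb, hu⟩
          exact le_foldr_max (fun u => depth (π u)) this
        refine ⟨applyAtom (extendO σ π) a, ?_, ?_⟩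
        · rw [depth_fresh, Nat.add_comm]
          exact Or.inr ⟨σ, hσ, π, htrigM, a, ha, rfl⟩
        · have : GTerm.fresh σ v (restrictBody σ π) = extendO σ π v := by
            simp [extendO, hvb]
          rw [this]
          exact List.mem_map_of_mem hv

end Aux

/-- for a set of fully-existential rules, existential depth and rank
coincide on every term of the oblivious chase. -/
theorem statement2 {P C V : Type} [DecidableEq V] (ar : P → ℕ)
    (Rs : Set (Rule P V)) (hFE : ∀ σ ∈ Rs, IsFE σ)
    (I : Set (GAtom P C V)) (hI : IsInstance ar I) :
    ∀ t ∈ adom (ochaseFull Rs I), depth t = trankO Rs I t := by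
  intro t ht
  obtain ⟨f, hf, htf⟩ := ht
  obtain ⟨S, ⟨i, rfl⟩, hfS⟩ := hf
  have hne : {j | ∃ g ∈ ochase Rs I j, t ∈ g.2}.Nonempty := ⟨i, f, hfS, htf⟩
  apply le_antisymm
  · have hmem := Nat.sInf_mem hne
    obtain ⟨g, hg, htg⟩ := hmem
    exact depth_le_round Rs I ar hI _ g hg t htg
  · obtain ⟨g, hg, htg⟩ := term_mem_depth Rs I hFE i f hfS t htf
    exact Nat.sInf_le ⟨g, hg, htg⟩

end ChasePaper
end

section
/- For any embedding φ from instance I to instance I' and any i ≥ 0, there exists an embedding φ' extending φ from so-chase^i(I, Σ) to so-chase^i(I', Σ) that preserves the frontier depth of terms. -/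
namespace ChasePaper

variable {P C V : Type}

/-- Lift an embedding homomorphically to chase terms, renaming fresh variables. -/
def phiHat [DecidableEq V] (φ : GTerm P C V → GTerm P C V) : GTerm P C V → GTerm P C V
  | .const c => φ (.const c)
  | .var v => φ (.var v)
  | .fresh σ v π => .fresh σ v (fun u => if u ∈ frontier σ then phiHat φ (π u) else .var u)

lemma phiHat_extendSO [DecidableEq V] (φ : GTerm P C V → GTerm P C V)
    (σ : Rule P V) (π : V → GTerm P C V) (v : V) :
    phiHat φ (extendSO σ π v) = extendSO σ (fun u => phiHat φ (π u)) v := by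
  unfold extendSO
  split
  · rfl
  · show GTerm.fresh σ v _ = GTerm.fresh σ v _
    congr 1
    funext u
    unfold phiHat restrictFr
    by_cases hu : u ∈ frontier σ <;> simp [hu]

lemma fold_max_congr {α : Type*} (l : List α) (g g' : α → ℕ)
    (h : ∀ u ∈ l, g u = g' u) :
    List.foldr (fun v m => max (g v) m) 0 l = List.foldr (fun v m => max (g' v) m) 0 l := by
  induction l with
  | nil => rfl
  | cons a l ih =>
      simp only [List.foldr_cons]
      rw [h a (by simp), ih (fun u hu => h u (by simp [hu]))]

lemma mem_bodyVars_trigger [DecidableEq V] {σ : Rule P V} {π : V → GTerm P C V}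
    {S : Set (GAtom P C V)} (hT : isTrigger σ π S) {v : V} (hv : v ∈ bodyVars σ) :
    π v ∈ adom S := by
  unfold bodyVars at hv
  rw [List.mem_flatMap] at hv
  obtain ⟨b, hb, hvb⟩ := hv
  exact ⟨applyAtom π b, hT b hb, List.mem_map_of_mem (f := π) hvb⟩

lemma phiHat_emb [DecidableEq V] (Rs : Set (Rule P V)) {I I' : Set (GAtom P C V)}
    {ar : P → ℕ} (hI : IsInstance ar I)
    {φ : GTerm P C V → GTerm P C V} (hφ : IsEmbedding φ I I') (i : ℕ) :
    IsEmbedding (phiHat φ) (sochase Rs I i) (sochase Rs I' i) := by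
  induction i with
  | zero =>
      intro f hf
      have : mapAtom (phiHat φ) f = mapAtom φ f := by
        unfold mapAtom
        congr 1
        apply List.map_congr_left
        intro t ht
        rcases (hI.2 f hf).2 t ht with ⟨c, rfl⟩ | ⟨v, rfl⟩ <;> rfl
      rw [this]
      exact hφ f hf
  | succ i ih =>
      intro f hf
      rcases hf with hf | ⟨σ, hσ, π, hT, a, ha, rfl⟩
      · exact Or.inl (ih f hf)
      · right
        refine ⟨σ, hσ, fun u => phiHat φ (π u), ?_, a, ha, ?_⟩
        · intro b hb
          have := ih _ (hT b hb)
          simpa [mapAtom, applyAtom, List.map_map, Function.comp_def] using this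
        · unfold mapAtom applyAtom
          simp only [List.map_map]
          congr 1
          apply List.map_congr_left
          intro v _
          exact phiHat_extendSO φ σ π v

lemma phiHat_frdepth [DecidableEq V] (Rs : Set (Rule P V)) {I I' : Set (GAtom P C V)}
    {ar : P → ℕ} (hI : IsInstance ar I) (hI' : IsInstance ar I')
    {φ : GTerm P C V → GTerm P C V} (hφ : IsEmbedding φ I I') (i : ℕ) :
    ∀ t ∈ adom (sochase Rs I i), frdepth t = frdepth (phiHat φ t) := by
  induction i with
  | zero =>
      rintro t ⟨f, hf, ht⟩
      have hφt : φ t ∈ adom I' := by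
        refine ⟨mapAtom φ f, hφ f hf, ?_⟩
        exact List.mem_map_of_mem (f := φ) ht
      have h0 : frdepth (φ t) = 0 := by
        obtain ⟨f', hf', htf'⟩ := hφt
        rcases (hI'.2 f' hf').2 _ htf' with ⟨c, hc⟩ | ⟨v, hv⟩
        · rw [hc]; rfl
        · rw [hv]; rfl
      rcases (hI.2 f hf).2 t ht with ⟨c, rfl⟩ | ⟨v, rfl⟩ <;>
        simp only [phiHat, h0] <;> rfl
  | succ i ih =>
      rintro t ⟨f, hf, ht⟩
      rcases hf with hf | ⟨σ, hσ, π, hT, a, ha, rfl⟩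
      · exact ih t ⟨f, hf, ht⟩
      · unfold applyAtom at ht
        rw [List.mem_map] at ht
        obtain ⟨v, hv, rfl⟩ := ht
        unfold extendSO
        split
        · next hvb => exact ih _ (mem_bodyVars_trigger hT hvb)
        · show frdepth (GTerm.fresh σ v (restrictFr σ π)) =
            frdepth (phiHat φ (GTerm.fresh σ v (restrictFr σ π)))
          unfold phiHat frdepth
          split
          · rfl
          · congr 1
            apply fold_max_congr
            intro u hu
            have hub : u ∈ bodyVars σ := by
              unfold frontier at hu
              exact (List.mem_filter.mp hu).1
            simp only [restrictFr, hu, if_true, if_pos, ite_true]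
            exact ih _ (mem_bodyVars_trigger hT hub)

/-- any embedding `φ : I → I'` extends, for every rank `i`, to an
embedding `φ'` between the rank-`i` semi-oblivious chases that preserves the
frontier depth of terms. -/
theorem statement11 {P C V : Type} [DecidableEq V] (ar : P → ℕ)
    (Rs : Set (Rule P V)) (I I' : Set (GAtom P C V))
    (hI : IsInstance ar I) (hI' : IsInstance ar I')
    (φ : GTerm P C V → GTerm P C V) (hφ : IsEmbedding φ I I') (i : ℕ) :
    ∃ φ' : GTerm P C V → GTerm P C V,
      (∀ t ∈ adom I, φ' t = φ t) ∧
      IsEmbedding φ' (sochase Rs I i) (sochase Rs I' i) ∧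
      ∀ t ∈ adom (sochase Rs I i), frdepth t = frdepth (φ' t) := by
  refine ⟨phiHat φ, ?_, phiHat_emb Rs hI hφ i, phiHat_frdepth Rs hI hI' hφ i⟩
  rintro t ⟨f, hf, ht⟩
  rcases (hI.2 f hf).2 t ht with ⟨c, rfl⟩ | ⟨v, rfl⟩ <;> rfl

end ChasePaper
end
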